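/- Every interval (i.e., connected convex nonempty subposet) of the bipath poset B is exactly one of the following: (1) the full poset B; (2) a left interval [i,j]◁ = {z : 0 ≤ z ≤ i} ∪ {z : 0 ≤ z ≤ j} for some i ∈ {0,...,n−1} and j ∈ {0, n+m−1,...,n+1}; (3) a right interval [i,j]▷ = {z : i ≤ z ≤ n} ∪ {z : j ≤ z ≤ n} for some i ∈ {1,...,n} and j ∈ {n+m−1,...,n+1,n}; (4) a top interval [i,j]⊤ = {z : i ≤ z ≤ j} for some i, j ∈ {1,...,n−1} with i ≤ j; (5) a bottom interval [i,j]⊥ = {z : j ≤ z ≤ i} for some i, j ∈ {n+m−1,...,n+1} with j ≤ i (in the bipath order). -/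

import Mathlib

open CategoryTheory CategoryTheory.Limits

def ZZ : Type := {p : ℤᵒᵈ × ℤ // OrderDual.ofDual p.1 = p.2 ∨ OrderDual.ofDual p.1 = p.2 + 1}

noncomputable instance : PartialOrder ZZ := Subtype.partialOrder _

def ZZ.a (p : ZZ) : ℤ := OrderDual.ofDual p.1.1
def ZZ.b (p : ZZ) : ℤ := p.1.2

def Bipath (n m : ℕ) : Type := {z : ℕ // z < n + m}

def bipathLE (n : ℕ) (x y : ℕ) : Prop :=
  x = y ∨ (0 < n ∧ ((x ≤ y ∧ y ≤ n) ∨ (n ≤ y ∧ y ≤ x) ∨ x = 0 ∨ y = n))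

lemma bipathLE_refl (n x : ℕ) : bipathLE n x x := by unfold bipathLE; omega

lemma bipathLE_trans {n x y z : ℕ} (h1 : bipathLE n x y) (h2 : bipathLE n y z) :
    bipathLE n x z := by unfold bipathLE at *; omega

lemma bipathLE_antisymm {n x y : ℕ} (h1 : bipathLE n x y) (h2 : bipathLE n y x) :
    x = y := by unfold bipathLE at *; omega

instance (n m : ℕ) : PartialOrder (Bipath n m) where
  le x y := bipathLE n x.1 y.1
  le_refl x := bipathLE_refl n x.1
  le_trans _ _ _ h1 h2 := bipathLE_trans h1 h2
  le_antisymm _ _ h1 h2 := Subtype.ext (bipathLE_antisymm h1 h2)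

def zetaFun (n m : ℕ) (a b : ℤ) : ℕ :=
  if b % ((n : ℤ) + m - 1) = 0 then (if a = b then n + m - 1 else 0)
  else if a = b then (b % ((n : ℤ) + m - 1)).toNat
  else if b % ((n : ℤ) + m - 1) ≤ (n : ℤ) - 1 then (b % ((n : ℤ) + m - 1)).toNat
  else (b % ((n : ℤ) + m - 1)).toNat + 1

lemma zetaFun_lt (n m : ℕ) (hn : 1 < n) (hm : 1 < m) (a b : ℤ) :
    zetaFun n m a b < n + m := by
  unfold zetaFun
  have hN : (0:ℤ) < (n : ℤ) + m - 1 := by omega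
  have h1 := Int.emod_nonneg b (by omega : ((n:ℤ) + m - 1) ≠ 0)
  have h2 := Int.emod_lt_of_pos b hN
  split_ifs <;> omega

def zeta (n m : ℕ) (hn : 1 < n) (hm : 1 < m) (p : ZZ) : Bipath n m :=
  ⟨zetaFun n m p.a p.b, zetaFun_lt n m hn hm _ _⟩
open CategoryTheory CategoryTheory.Limits
open scoped Classical

section IntervalModule
variable (k : Type) [Field k] {P : Type} [Preorder P]

/-- Convexity of a subset of a poset. -/
def IsConvexIn (I : Set P) : Prop :=
  ∀ ⦃p z q : P⦄, p ∈ I → q ∈ I → p ≤ z → z ≤ q → z ∈ I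

/-- Connectedness of a subset of a poset: any two points are joined by a
zigzag of comparabilities inside the subset. -/
def IsConnectedIn (I : Set P) : Prop :=
  ∀ x ∈ I, ∀ y ∈ I,
    Relation.ReflTransGen (fun a b => a ∈ I ∧ b ∈ I ∧ (a ≤ b ∨ b ≤ a)) x y

/-- An interval of a poset: a nonempty convex connected subset. -/
structure IsIntervalIn (I : Set P) : Prop where
  nonempty : I.Nonempty
  convex : IsConvexIn I
  connected : IsConnectedIn I

/-- The fiber of the interval module at a point: `k` if `p ∈ I`, `0` otherwise. -/
def intervalFiber (I : Set P) (p : P) : Submodule k k where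
  carrier := {x : k | p ∉ I → x = 0}
  add_mem' := by intro a b ha hb h; rw [ha h, hb h, add_zero]
  zero_mem' := fun _ => rfl
  smul_mem' := by intro c x hx h; rw [smul_eq_mul, hx h, mul_zero]

/-- Internal maps of the interval module. -/
noncomputable def intervalMap (I : Set P) (p q : P) :
    intervalFiber k I p →ₗ[k] intervalFiber k I q where
  toFun x := ⟨if q ∈ I then x.1 else 0, fun hq => if_neg hq⟩
  map_add' x y := by apply Subtype.ext; by_cases hq : q ∈ I <;> simp [hq]
  map_smul' c x := by apply Subtype.ext; by_cases hq : q ∈ I <;> simp [hq]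

/-- The interval module `kI` supported on a convex subset `I`:
it is `k` on `I` with identity internal maps, and `0` elsewhere. -/
noncomputable def intervalModule (I : Set P) (hI : IsConvexIn I) : P ⥤ ModuleCat k where
  obj p := ModuleCat.of k (intervalFiber k I p)
  map {p q} _ := ModuleCat.ofHom (intervalMap k I p q)
  map_id p := by
    ext x
    show (if p ∈ I then x.1 else 0) = x.1
    by_cases hp : p ∈ I
    · simp [hp]
    · simp [hp, x.2 hp]
  map_comp {p q r} f g := by
    ext x
    show (if r ∈ I then x.1 else 0) = (if r ∈ I then (if q ∈ I then x.1 else 0) else 0)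
    by_cases hr : r ∈ I
    · by_cases hq : q ∈ I
      · simp [hr, hq]
      · have hp : p ∉ I := fun hp => hq (hI hp hr f.le g.le)
        simp [hr, hq, x.2 hp]
    · simp [hr]

end IntervalModule

/-- The restriction functor along a monotone map, by precomposition. -/
noncomputable def restrictAlong (k : Type) [Field k] {P Q : Type} [Preorder P] [Preorder Q]
    {f : P → Q} (hf : Monotone f) : (Q ⥤ ModuleCat k) ⥤ (P ⥤ ModuleCat k) :=
  (Functor.whiskeringLeft _ _ _).obj hf.functor


lemma ZZ.le_iff {p q : ZZ} : p ≤ q ↔ q.a ≤ p.a ∧ p.b ≤ q.b := Iff.rfl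

/-- Translation of a zigzag point by `z * N` in both coordinates. -/
def ZZ.translate (N z : ℤ) (p : ZZ) : ZZ :=
  ⟨(OrderDual.toDual (p.a + z * N), p.b + z * N), by
    rcases p.2 with h | h
    · left; show p.a + z * N = p.b + z * N; unfold ZZ.a ZZ.b at *; omega
    · right; show p.a + z * N = p.b + z * N + 1; unfold ZZ.a ZZ.b at *; omega⟩

/-- The interval `[a,b]_ZZ = {(c,d) ∈ ZZ : c ≤ b, d ≥ a}`. -/
def zzIcc (a b : ℤ) : Set ZZ := {p | p.a ≤ b ∧ a ≤ p.b}
/-- The interval `[a,b)_ZZ = {(c,d) ∈ ZZ : a ≤ d < b}`. -/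
def zzIco (a b : ℤ) : Set ZZ := {p | a ≤ p.b ∧ p.b < b}
/-- The interval `(a,b]_ZZ = {(c,d) ∈ ZZ : a < c ≤ b}`. -/
def zzIoc (a b : ℤ) : Set ZZ := {p | a < p.a ∧ p.a ≤ b}
/-- The interval `(a,b)_ZZ = {(c,d) ∈ ZZ : c > a, d < b}`. -/
def zzIoo (a b : ℤ) : Set ZZ := {p | a < p.a ∧ p.b < b}

lemma zzIcc_convex (a b : ℤ) : IsConvexIn (zzIcc a b) := by
  intro p z q hp hq hpz hzq
  exact ⟨le_trans (ZZ.le_iff.1 hpz).1 hp.1, le_trans hp.2 (ZZ.le_iff.1 hpz).2⟩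

lemma zzIco_convex (a b : ℤ) : IsConvexIn (zzIco a b) := by
  intro p z q hp hq hpz hzq
  exact ⟨le_trans hp.1 (ZZ.le_iff.1 hpz).2, lt_of_le_of_lt (ZZ.le_iff.1 hzq).2 hq.2⟩

lemma zzIoc_convex (a b : ℤ) : IsConvexIn (zzIoc a b) := by
  intro p z q hp hq hpz hzq
  exact ⟨lt_of_lt_of_le hq.1 (ZZ.le_iff.1 hzq).1, le_trans (ZZ.le_iff.1 hpz).1 hp.2⟩

lemma zzIoo_convex (a b : ℤ) : IsConvexIn (zzIoo a b) := by
  intro p z q hp hq hpz hzq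
  exact ⟨lt_of_lt_of_le hq.1 (ZZ.le_iff.1 hzq).1, lt_of_le_of_lt (ZZ.le_iff.1 hzq).2 hq.2⟩

section ConvexLemmas
variable {P : Type} [Preorder P]

lemma isConvex_univ : IsConvexIn (Set.univ : Set P) := fun _ _ _ _ _ _ _ => trivial

lemma isConvex_lower2 (a b : P) : IsConvexIn {z : P | z ≤ a ∨ z ≤ b} := by
  intro p z q hp hq hpz hzq
  rcases hq with h | h
  · exact Or.inl (le_trans hzq h)
  · exact Or.inr (le_trans hzq h)

lemma isConvex_upper2 (a b : P) : IsConvexIn {z : P | a ≤ z ∨ b ≤ z} := by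
  intro p z q hp hq hpz hzq
  rcases hp with h | h
  · exact Or.inl (le_trans h hpz)
  · exact Or.inr (le_trans h hpz)

lemma isConvex_Icc (a b : P) : IsConvexIn {z : P | a ≤ z ∧ z ≤ b} :=
  fun _ _ _ hp hq hpz hzq => ⟨le_trans hp.1 hpz, le_trans hzq hq.2⟩

end ConvexLemmas


section BipathAux

lemma hub_connected {P : Type} [Preorder P] {I : Set P} {h : P} (hh : h ∈ I)
    (hub : ∀ x ∈ I, x ≤ h ∨ h ≤ x) : IsConnectedIn I := fun x hx y hy =>
  Relation.ReflTransGen.trans (Relation.ReflTransGen.single ⟨hx, hh, hub x hx⟩)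
    (Relation.ReflTransGen.single ⟨hh, hy, (hub y hy).symm⟩)

end BipathAux

/-- Classification of the intervals of the bipath poset: every interval is
the full poset, a left interval, a right interval, a top interval or a
bottom interval. -/
theorem bipath_interval_classification (n m : ℕ) (hn : 1 < n) (hm : 1 < m)
    (I : Set (Bipath n m)) :
    IsIntervalIn I ↔
      (I = Set.univ ∨
       (∃ i j : Bipath n m, i.1 ≤ n - 1 ∧ (j.1 = 0 ∨ n + 1 ≤ j.1) ∧
          I = {z | z ≤ i ∨ z ≤ j}) ∨
       (∃ i j : Bipath n m, 1 ≤ i.1 ∧ i.1 ≤ n ∧ (j.1 = n ∨ n + 1 ≤ j.1) ∧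
          I = {z | i ≤ z ∨ j ≤ z}) ∨
       (∃ i j : Bipath n m, 1 ≤ i.1 ∧ i.1 ≤ n - 1 ∧ 1 ≤ j.1 ∧ j.1 ≤ n - 1 ∧ i ≤ j ∧
          I = {z | i ≤ z ∧ z ≤ j}) ∨
       (∃ i j : Bipath n m, n + 1 ≤ i.1 ∧ n + 1 ≤ j.1 ∧ j ≤ i ∧
          I = {z | j ≤ z ∧ z ≤ i})) := by
  constructor
  · rintro ⟨hne, hconv, hconn⟩
    by_cases h0 : (⟨0, by omega⟩ : Bipath n m) ∈ I
    · by_cases hN : (⟨n, by omega⟩ : Bipath n m) ∈ I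
      · -- full poset
        left
        ext z
        simp only [Set.mem_univ, iff_true]
        exact hconv h0 hN (show bipathLE n 0 z.1 by unfold bipathLE; omega)
          (show bipathLE n z.1 n by unfold bipathLE; omega)
      · -- left interval
        right; left
        have hzn : ∀ z ∈ I, z.1 ≠ n := by
          intro z hz h
          exact hN (by rwa [show (⟨n, by omega⟩ : Bipath n m) = z from Subtype.ext h.symm])
        have hP0 : ∃ h : (0:ℕ) < n + m, (⟨0, h⟩ : Bipath n m) ∈ I := ⟨by omega, h0⟩
        have hi0mem := Nat.findGreatest_spec (P := fun k => ∃ h : k < n + m,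
          (⟨k, h⟩ : Bipath n m) ∈ I) (Nat.zero_le (n-1)) hP0
        set i0 := Nat.findGreatest (fun k => ∃ h : k < n + m,
          (⟨k, h⟩ : Bipath n m) ∈ I) (n-1) with hi0def
        obtain ⟨hi0lt, hi0I⟩ := hi0mem
        have hi0le : i0 ≤ n - 1 := Nat.findGreatest_le _
        by_cases hR : ∃ k, n + 1 ≤ k ∧ ∃ h : k < n + m, (⟨k, h⟩ : Bipath n m) ∈ I
        · obtain ⟨hj0ge, hj0lt, hj0I⟩ := Nat.find_spec hR
          set j0 := Nat.find hR with hj0def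
          refine ⟨⟨i0, hi0lt⟩, ⟨j0, hj0lt⟩, hi0le, Or.inr hj0ge, ?_⟩
          ext z
          constructor
          · intro hz
            have hn1 := hzn z hz
            by_cases hc : z.1 ≤ n - 1
            · have hle : z.1 ≤ i0 := Nat.le_findGreatest hc ⟨z.2, hz⟩
              exact Or.inl (show bipathLE n z.1 i0 by unfold bipathLE; omega)
            · have hge : n + 1 ≤ z.1 := by omega
              have hle : j0 ≤ z.1 := Nat.find_min' hR ⟨hge, z.2, hz⟩
              exact Or.inr (show bipathLE n z.1 j0 by unfold bipathLE; omega)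
          · rintro (hz | hz)
            · exact hconv h0 hi0I (show bipathLE n 0 z.1 by unfold bipathLE; omega) hz
            · exact hconv h0 hj0I (show bipathLE n 0 z.1 by unfold bipathLE; omega) hz
        · refine ⟨⟨i0, hi0lt⟩, ⟨0, by omega⟩, hi0le, Or.inl rfl, ?_⟩
          ext z
          constructor
          · intro hz
            have hn1 := hzn z hz
            have hc : z.1 ≤ n - 1 := by
              by_contra hc
              exact hR ⟨z.1, by omega, z.2, hz⟩
            have hle : z.1 ≤ i0 := Nat.le_findGreatest hc ⟨z.2, hz⟩
            exact Or.inl (show bipathLE n z.1 i0 by unfold bipathLE; omega)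
          · rintro (hz | hz)
            · exact hconv h0 hi0I (show bipathLE n 0 z.1 by unfold bipathLE; omega) hz
            · exact hconv h0 h0 (show bipathLE n 0 z.1 by unfold bipathLE; omega) hz
    · by_cases hN : (⟨n, by omega⟩ : Bipath n m) ∈ I
      · -- right interval
        right; right; left
        have hz0 : ∀ z ∈ I, z.1 ≠ 0 := by
          intro z hz h
          exact h0 (by rwa [show (⟨0, by omega⟩ : Bipath n m) = z from Subtype.ext h.symm])
        have hex : ∃ k, ∃ h : k < n + m, (⟨k, h⟩ : Bipath n m) ∈ I := ⟨n, by omega, hN⟩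
        obtain ⟨hi0lt, hi0I⟩ := Nat.find_spec hex
        set i0 := Nat.find hex with hi0def
        have hi0n : i0 ≤ n := Nat.find_min' hex ⟨by omega, hN⟩
        have hi0pos : 1 ≤ i0 := by
          have h : i0 ≠ 0 := hz0 _ hi0I
          omega
        have hmin : ∀ z ∈ I, i0 ≤ z.1 := fun z hz => Nat.find_min' hex ⟨z.2, hz⟩
        by_cases hR : ∃ k, n + 1 ≤ k ∧ ∃ h : k < n + m, (⟨k, h⟩ : Bipath n m) ∈ I
        · obtain ⟨k, hk1, hklt, hkI⟩ := hR
          have hj0mem := Nat.findGreatest_spec (P := fun k => n + 1 ≤ k ∧ ∃ h : k < n + m,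
            (⟨k, h⟩ : Bipath n m) ∈ I) (show k ≤ n + m - 1 by omega) ⟨hk1, hklt, hkI⟩
          set j0 := Nat.findGreatest (fun k => n + 1 ≤ k ∧ ∃ h : k < n + m,
            (⟨k, h⟩ : Bipath n m) ∈ I) (n + m - 1) with hj0def
          obtain ⟨hj0ge, hj0lt, hj0I⟩ := hj0mem
          refine ⟨⟨i0, by omega⟩, ⟨j0, hj0lt⟩, hi0pos, hi0n, Or.inr hj0ge, ?_⟩
          ext z
          constructor
          · intro hz
            have h1 := hmin z hz
            by_cases hc : z.1 ≤ n
            · exact Or.inl (show bipathLE n i0 z.1 by unfold bipathLE; omega)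
            · have hzlt := z.2
              have hle : z.1 ≤ j0 := Nat.le_findGreatest (show z.1 ≤ n + m - 1 by omega)
                ⟨by omega, z.2, hz⟩
              exact Or.inr (show bipathLE n j0 z.1 by unfold bipathLE; omega)
          · rintro (hz | hz)
            · exact hconv hi0I hN hz (show bipathLE n z.1 n by unfold bipathLE; omega)
            · exact hconv hj0I hN hz (show bipathLE n z.1 n by unfold bipathLE; omega)
        · refine ⟨⟨i0, by omega⟩, ⟨n, by omega⟩, hi0pos, hi0n, Or.inl rfl, ?_⟩
          ext z
          constructor
          · intro hz
            have h1 := hmin z hz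
            have hc : z.1 ≤ n := by
              by_contra hc
              exact hR ⟨z.1, by omega, z.2, hz⟩
            exact Or.inl (show bipathLE n i0 z.1 by unfold bipathLE; omega)
          · rintro (hz | hz)
            · exact hconv hi0I hN hz (show bipathLE n z.1 n by unfold bipathLE; omega)
            · exact hconv hN hN hz (show bipathLE n z.1 n by unfold bipathLE; omega)
      · -- top or bottom interval
        right; right; right
        have hne0n : ∀ z ∈ I, z.1 ≠ 0 ∧ z.1 ≠ n := by
          intro z hz
          constructor
          · intro h
            exact h0 (by rwa [show (⟨0, by omega⟩ : Bipath n m) = z from Subtype.ext h.symm])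
          · intro h
            exact hN (by rwa [show (⟨n, by omega⟩ : Bipath n m) = z from Subtype.ext h.symm])
        obtain ⟨x, hx⟩ := hne
        have hside : ∀ y ∈ I, (x.1 < n ↔ y.1 < n) := by
          have key : ∀ y, Relation.ReflTransGen
              (fun a b : Bipath n m => a ∈ I ∧ b ∈ I ∧ (a ≤ b ∨ b ≤ a)) x y →
              (x.1 < n ↔ y.1 < n) := by
            intro y h
            induction h with
            | refl => exact Iff.rfl
            | tail h1 step ih =>
              obtain ⟨hbI, hcI, hbc⟩ := step
              have hb := hne0n _ hbI
              have hc := hne0n _ hcI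
              have hbc' : bipathLE n _ _ ∨ bipathLE n _ _ := hbc
              unfold bipathLE at hbc'
              omega
          exact fun y hy => key y (hconn x hx y hy)
        by_cases hxn : x.1 < n
        · -- top interval
          left
          have hrange : ∀ z ∈ I, 1 ≤ z.1 ∧ z.1 ≤ n - 1 := by
            intro z hz
            have h1 := hne0n z hz
            have h2 := hside z hz
            omega
          have hex : ∃ k, ∃ h : k < n + m, (⟨k, h⟩ : Bipath n m) ∈ I := ⟨x.1, x.2, hx⟩
          obtain ⟨hi0lt, hi0I⟩ := Nat.find_spec hex
          set i0 := Nat.find hex with hi0def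
          have hmin : ∀ z ∈ I, i0 ≤ z.1 := fun z hz => Nat.find_min' hex ⟨z.2, hz⟩
          have hj0mem := Nat.findGreatest_spec (P := fun k => ∃ h : k < n + m,
            (⟨k, h⟩ : Bipath n m) ∈ I) (show x.1 ≤ n - 1 from (hrange x hx).2) ⟨x.2, hx⟩
          set j0 := Nat.findGreatest (fun k => ∃ h : k < n + m,
            (⟨k, h⟩ : Bipath n m) ∈ I) (n - 1) with hj0def
          obtain ⟨hj0lt, hj0I⟩ := hj0mem
          have hj0le : j0 ≤ n - 1 := Nat.findGreatest_le _
          have hi0r : 1 ≤ i0 ∧ i0 ≤ n - 1 := hrange _ hi0I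
          have hj0r : 1 ≤ j0 ∧ j0 ≤ n - 1 := hrange _ hj0I
          have hij : i0 ≤ j0 := hmin _ hj0I
          refine ⟨⟨i0, hi0lt⟩, ⟨j0, hj0lt⟩, hi0r.1, hi0r.2, hj0r.1, hj0r.2,
            show bipathLE n i0 j0 by unfold bipathLE; omega, ?_⟩
          ext z
          constructor
          · intro hz
            have h1 := hmin z hz
            have h2 := hrange z hz
            have h3 : z.1 ≤ j0 := Nat.le_findGreatest h2.2 ⟨z.2, hz⟩
            exact ⟨show bipathLE n i0 z.1 by unfold bipathLE; omega,
              show bipathLE n z.1 j0 by unfold bipathLE; omega⟩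
          · rintro ⟨hz1, hz2⟩
            exact hconv hi0I hj0I hz1 hz2
        · -- bottom interval
          right
          have hrange : ∀ z ∈ I, n + 1 ≤ z.1 ∧ z.1 ≤ n + m - 1 := by
            intro z hz
            have h1 := hne0n z hz
            have h2 := hside z hz
            have h3 := z.2
            omega
          have hex : ∃ k, ∃ h : k < n + m, (⟨k, h⟩ : Bipath n m) ∈ I := ⟨x.1, x.2, hx⟩
          obtain ⟨hi0lt, hi0I⟩ := Nat.find_spec hex
          set i0 := Nat.find hex with hi0def
          have hmin : ∀ z ∈ I, i0 ≤ z.1 := fun z hz => Nat.find_min' hex ⟨z.2, hz⟩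
          have hj0mem := Nat.findGreatest_spec (P := fun k => ∃ h : k < n + m,
            (⟨k, h⟩ : Bipath n m) ∈ I) (show x.1 ≤ n + m - 1 by have := x.2; omega) ⟨x.2, hx⟩
          set j0 := Nat.findGreatest (fun k => ∃ h : k < n + m,
            (⟨k, h⟩ : Bipath n m) ∈ I) (n + m - 1) with hj0def
          obtain ⟨hj0lt, hj0I⟩ := hj0mem
          have hi0r : n + 1 ≤ i0 ∧ i0 ≤ n + m - 1 := hrange _ hi0I
          have hj0r : n + 1 ≤ j0 ∧ j0 ≤ n + m - 1 := hrange _ hj0I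
          have hij : i0 ≤ j0 := hmin _ hj0I
          refine ⟨⟨i0, hi0lt⟩, ⟨j0, hj0lt⟩, hi0r.1, hj0r.1,
            show bipathLE n j0 i0 by unfold bipathLE; omega, ?_⟩
          ext z
          constructor
          · intro hz
            have h1 := hmin z hz
            have h2 := hrange z hz
            have h3 : z.1 ≤ j0 := Nat.le_findGreatest h2.2 ⟨z.2, hz⟩
            exact ⟨show bipathLE n j0 z.1 by unfold bipathLE; omega,
              show bipathLE n z.1 i0 by unfold bipathLE; omega⟩
          · rintro ⟨hz1, hz2⟩
            exact hconv hj0I hi0I hz1 hz2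
  · rintro (rfl | ⟨i, j, hi, hj, rfl⟩ | ⟨i, j, hi1, hi2, hj, rfl⟩ |
      ⟨i, j, h1, h2, h3, h4, h5, rfl⟩ | ⟨i, j, h1, h2, h3, rfl⟩)
    · exact ⟨⟨⟨0, by omega⟩, trivial⟩, isConvex_univ,
        hub_connected (h := (⟨0, by omega⟩ : Bipath n m)) trivial
          (fun x _ => Or.inr (show bipathLE n 0 x.1 by unfold bipathLE; omega))⟩
    · have h0mem : (⟨0, by omega⟩ : Bipath n m) ∈ {z | z ≤ i ∨ z ≤ j} :=
        Or.inl (show bipathLE n 0 i.1 by unfold bipathLE; omega)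
      exact ⟨⟨_, h0mem⟩, isConvex_lower2 i j,
        hub_connected h0mem
          (fun x _ => Or.inr (show bipathLE n 0 x.1 by unfold bipathLE; omega))⟩
    · have hnmem : (⟨n, by omega⟩ : Bipath n m) ∈ {z | i ≤ z ∨ j ≤ z} :=
        Or.inl (show bipathLE n i.1 n by unfold bipathLE; omega)
      exact ⟨⟨_, hnmem⟩, isConvex_upper2 i j,
        hub_connected hnmem
          (fun x _ => Or.inl (show bipathLE n x.1 n by unfold bipathLE; omega))⟩
    · have himem : i ∈ {z | i ≤ z ∧ z ≤ j} := ⟨le_refl i, h5⟩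
      exact ⟨⟨_, himem⟩, isConvex_Icc i j,
        hub_connected himem (fun x hx => Or.inr hx.1)⟩
    · have himem : i ∈ {z | j ≤ z ∧ z ≤ i} := ⟨h3, le_refl i⟩
      exact ⟨⟨_, himem⟩, isConvex_Icc j i,
        hub_connected himem (fun x hx => Or.inl hx.2)⟩
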